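/- Let f : [0,1]^d → ℝ be a non-negative, continuously differentiable, M₁-Lipschitz, continuous DR-submodular function, and let F be the surrogate potential. Let Z be a random variable on [0,1] with probability density p(z) = e^{z−1} / (1 − e^{−1}). Then for every x ∈ [0,1]^d: E_Z[ ∇f(1 − e^{−Z x}) ⊙ e^{−Z x} ] = ∇F(x), i.e., the BQND estimator with an exact first-order oracle is an unbiased estimate of the surrogate gradient 𝔤(f,x) = ∇F(x). -/

import Mathlib

open scoped RealInnerProductSpace

noncomputable section

/-- Membership in the unit box `[0,1]^d`. -/
def inBox {d : ℕ} (x : EuclideanSpace ℝ (Fin d)) : Prop :=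
  ∀ i, x i ∈ Set.Icc (0 : ℝ) 1

/-- Continuous DR-submodularity: the gradient is coordinate-wise antitone on `[0,1]^d`. -/
def DRSubmodular {d : ℕ} (f : EuclideanSpace ℝ (Fin d) → ℝ) : Prop :=
  ∀ x y : EuclideanSpace ℝ (Fin d), inBox x → inBox y → (∀ i, x i ≤ y i) →
    ∀ i, gradient f y i ≤ gradient f x i

/-- The exponential reparametrization `h_z(x) = 1 - e^{-z x}` (coordinate-wise). -/
def hmap {d : ℕ} (z : ℝ) (x : EuclideanSpace ℝ (Fin d)) : EuclideanSpace ℝ (Fin d) :=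
  WithLp.toLp 2 (fun i => 1 - Real.exp (-(z * x i)))

/-- Coordinate-wise probabilistic sum `x ⊕ y = 1 - (1-x) ⊙ (1-y)`. -/
def psum {d : ℕ} (x y : EuclideanSpace ℝ (Fin d)) : EuclideanSpace ℝ (Fin d) :=
  WithLp.toLp 2 (fun i => 1 - (1 - x i) * (1 - y i))

/-- Coordinate-wise (Hadamard) product. -/
def had {d : ℕ} (u v : EuclideanSpace ℝ (Fin d)) : EuclideanSpace ℝ (Fin d) :=
  WithLp.toLp 2 (fun i => u i * v i)

/-- Coordinate-wise exponential `e^{-z x}`. -/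
def expv {d : ℕ} (z : ℝ) (x : EuclideanSpace ℝ (Fin d)) : EuclideanSpace ℝ (Fin d) :=
  WithLp.toLp 2 (fun i => Real.exp (-(z * x i)))

/-- The surrogate potential
`F(x) = ∫₀¹ (e^{z-1} / ((1-e⁻¹) z)) (f(1 - e^{-z x}) - f(0)) dz`. -/
def surrogate {d : ℕ} (f : EuclideanSpace ℝ (Fin d) → ℝ)
    (x : EuclideanSpace ℝ (Fin d)) : ℝ :=
  ∫ z in (0:ℝ)..1, (Real.exp (z - 1) / ((1 - Real.exp (-1)) * z)) * (f (hmap z x) - f 0)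

/-- A set `K ⊆ [0,1]^d` is down-closed if `y ∈ K` and `0 ≤ x ≤ y` imply `x ∈ K`. -/
def DownClosed {d : ℕ} (K : Set (EuclideanSpace ℝ (Fin d))) : Prop :=
  ∀ y ∈ K, ∀ x : EuclideanSpace ℝ (Fin d), (∀ i, 0 ≤ x i) → (∀ i, x i ≤ y i) → x ∈ K

lemma euclid_norm_le_norm {d : ℕ} {u v : EuclideanSpace ℝ (Fin d)}
    (h : ∀ i, |u i| ≤ |v i|) : ‖u‖ ≤ ‖v‖ := by
  rw [EuclideanSpace.norm_eq, EuclideanSpace.norm_eq]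
  refine Real.sqrt_le_sqrt (Finset.sum_le_sum fun i _ => ?_)
  simp only [Real.norm_eq_abs]
  exact pow_le_pow_left₀ (abs_nonneg _) (h i) 2

/-- The derivative of `hmap z` at `y`. -/
def hmapD {d : ℕ} (z : ℝ) (y : EuclideanSpace ℝ (Fin d)) :
    EuclideanSpace ℝ (Fin d) →L[ℝ] EuclideanSpace ℝ (Fin d) :=
  ((PiLp.continuousLinearEquiv 2 ℝ (fun _ : Fin d => ℝ)).symm :
      (Fin d → ℝ) →L[ℝ] EuclideanSpace ℝ (Fin d)).comp
    (ContinuousLinearMap.pi fun i =>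
      (z * Real.exp (-(z * y i))) • EuclideanSpace.proj i)

lemma hmapD_apply {d : ℕ} (z : ℝ) (y u : EuclideanSpace ℝ (Fin d)) (i : Fin d) :
    hmapD z y u i = z * Real.exp (-(z * y i)) * u i := by
  simp [hmapD]

lemma hasFDerivAt_hmap {d : ℕ} (z : ℝ) (y : EuclideanSpace ℝ (Fin d)) :
    HasFDerivAt (hmap z) (hmapD z y) y := by
  have hcoord : ∀ i : Fin d, HasFDerivAt (fun w : EuclideanSpace ℝ (Fin d) =>
      1 - Real.exp (-(z * w i)))
      ((z * Real.exp (-(z * y i))) • EuclideanSpace.proj (𝕜 := ℝ) i) y := by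
    intro i
    have h1 : HasDerivAt (fun t : ℝ => 1 - Real.exp (-(z * t)))
        (z * Real.exp (-(z * y i))) (y i) := by
      have ha : HasDerivAt (fun t : ℝ => -(z * t)) (-z) (y i) := by
        exact ((hasDerivAt_id' (y i)).const_mul z).neg.congr_deriv (by ring)
      have h2 := (Real.hasDerivAt_exp (-(z * y i))).comp (y i) ha
      have h3 := h2.const_sub 1
      refine h3.congr_deriv ?_
      ring
    exact h1.comp_hasFDerivAt (h₂ := fun t : ℝ => 1 - Real.exp (-(z * t))) y (EuclideanSpace.proj (𝕜 := ℝ) i).hasFDerivAt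
  have hpi : HasFDerivAt (fun w : EuclideanSpace ℝ (Fin d) =>
      (fun i => 1 - Real.exp (-(z * w i)) : Fin d → ℝ))
      (ContinuousLinearMap.pi fun i =>
        (z * Real.exp (-(z * y i))) • EuclideanSpace.proj (𝕜 := ℝ) i) y :=
    hasFDerivAt_pi.2 hcoord
  exact (((PiLp.continuousLinearEquiv 2 ℝ (fun _ : Fin d => ℝ)).symm :
      (Fin d → ℝ) →L[ℝ] EuclideanSpace ℝ (Fin d)).hasFDerivAt).comp y hpi

lemma hasGradientAt_comp_hmap {d : ℕ} {f : EuclideanSpace ℝ (Fin d) → ℝ}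
    (hf : ContDiff ℝ 1 f) (z : ℝ) (y : EuclideanSpace ℝ (Fin d)) :
    HasGradientAt (fun w => f (hmap z w))
      (z • had (gradient f (hmap z y)) (expv z y)) y := by
  have hdf : HasFDerivAt f (fderiv ℝ f (hmap z y)) (hmap z y) :=
    ((hf.differentiable one_ne_zero) (hmap z y)).hasFDerivAt
  have hcomp := hdf.comp y (hasFDerivAt_hmap z y)
  rw [hasGradientAt_iff_hasFDerivAt]
  refine hcomp.congr_fderiv ?_
  ext u
  rw [InnerProductSpace.toDual_apply_apply, ContinuousLinearMap.comp_apply]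
  have hg : fderiv ℝ f (hmap z y) =
      (InnerProductSpace.toDual ℝ (EuclideanSpace ℝ (Fin d))) (gradient f (hmap z y)) := by
    rw [gradient, LinearIsometryEquiv.apply_symm_apply]
  rw [hg, InnerProductSpace.toDual_apply_apply]
  rw [PiLp.inner_apply, PiLp.inner_apply]
  refine Finset.sum_congr rfl fun i _ => ?_
  simp only [RCLike.inner_apply, PiLp.smul_apply, had, expv, hmapD_apply, smul_eq_mul,
    starRingEnd_apply, star_trivial]
  ring

lemma abs_coord_le_norm {d : ℕ} (u : EuclideanSpace ℝ (Fin d)) (i : Fin d) : |u i| ≤ ‖u‖ := by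
  rw [EuclideanSpace.norm_eq, ← Real.sqrt_sq (abs_nonneg (u i)), sq_abs]
  apply Real.sqrt_le_sqrt
  have h : u i ^ 2 = ‖u i‖ ^ 2 := by rw [Real.norm_eq_abs, sq_abs]
  rw [h]
  exact Finset.single_le_sum (f := fun j => ‖u j‖ ^ 2) (fun j _ => sq_nonneg _)
    (Finset.mem_univ i)

lemma norm_le_sqrt_of_coord_le {d : ℕ} {u : EuclideanSpace ℝ (Fin d)} {A : ℝ}
    (h : ∀ i, |u i| ≤ A) : ‖u‖ ≤ Real.sqrt (d * A ^ 2) := by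
  rw [EuclideanSpace.norm_eq]
  apply Real.sqrt_le_sqrt
  calc ∑ i, ‖u i‖ ^ 2 ≤ ∑ _i : Fin d, A ^ 2 :=
        Finset.sum_le_sum fun i _ => by
          rw [Real.norm_eq_abs]; exact pow_le_pow_left₀ (abs_nonneg _) (h i) 2
    _ = d * A ^ 2 := by simp [Finset.sum_const, nsmul_eq_mul]

lemma continuous_hmap_z {d : ℕ} (y : EuclideanSpace ℝ (Fin d)) :
    Continuous fun z : ℝ => hmap z y := by
  have h : Continuous fun z : ℝ => (fun i => 1 - Real.exp (-(z * y i)) : Fin d → ℝ) :=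
    continuous_pi fun i => by fun_prop
  exact ((PiLp.continuousLinearEquiv 2 ℝ (fun _ : Fin d => ℝ)).symm.continuous).comp h

lemma continuous_gradient {d : ℕ} {f : EuclideanSpace ℝ (Fin d) → ℝ} (hf : ContDiff ℝ 1 f) :
    Continuous (gradient f) :=
  (InnerProductSpace.toDual ℝ (EuclideanSpace ℝ (Fin d))).symm.continuous.comp
    (hf.continuous_fderiv one_ne_zero)

lemma continuous_G {d : ℕ} {f : EuclideanSpace ℝ (Fin d) → ℝ} (hf : ContDiff ℝ 1 f)
    (y : EuclideanSpace ℝ (Fin d)) :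
    Continuous fun z : ℝ => had (gradient f (hmap z y)) (expv z y) := by
  have h1 : Continuous fun z : ℝ => gradient f (hmap z y) :=
    (continuous_gradient hf).comp (continuous_hmap_z y)
  have h : Continuous fun z : ℝ =>
      (fun i => gradient f (hmap z y) i * Real.exp (-(z * y i)) : Fin d → ℝ) :=
    continuous_pi fun i =>
      (((EuclideanSpace.proj (𝕜 := ℝ) i).continuous).comp h1).mul (by fun_prop)
  exact ((PiLp.continuousLinearEquiv 2 ℝ (fun _ : Fin d => ℝ)).symm.continuous).comp h


set_option maxHeartbeats 2000000 in
/-- Unbiasedness of the BQND estimator.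
For a non-negative, continuously differentiable, `M₁`-Lipschitz, continuous
DR-submodular `f` with surrogate potential `F`, with `Z` distributed on `[0,1]` with
density `p(z) = e^{z-1}/(1-e⁻¹)`, for every `x ∈ [0,1]^d`:
`E_Z[∇f(1 - e^{-Z x}) ⊙ e^{-Z x}] = ∫₀¹ p(z) (∇f(h_z(x)) ⊙ e^{-z x}) dz = ∇F(x)`. -/
theorem stmt12 {d : ℕ} (f : EuclideanSpace ℝ (Fin d) → ℝ) (M₁ : ℝ)
    (hf : ContDiff ℝ 1 f) (hpos : ∀ x, inBox x → 0 ≤ f x)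
    (hLip : ∀ x, inBox x → ‖gradient f x‖ ≤ M₁) (hDR : DRSubmodular f) :
    ∀ x : EuclideanSpace ℝ (Fin d), inBox x →
      (∫ z in (0:ℝ)..1, (Real.exp (z - 1) / (1 - Real.exp (-1))) •
          had (gradient f (hmap z x)) (expv z x)) =
        gradient (surrogate f) x := by
  intro x hx
  have h1e : (0:ℝ) < 1 - Real.exp (-1) := by
    have : Real.exp (-1) < 1 := Real.exp_lt_one_iff.mpr (by norm_num)
    linarith
  set μ : MeasureTheory.Measure ℝ := MeasureTheory.volume.restrict (Set.Ioc (0:ℝ) 1) with hμ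
  set A : ℝ := Real.exp (‖x‖ + 1) with hA
  have hA0 : 0 < A := Real.exp_pos _
  set R : ℝ := Real.sqrt (d * (1 + A) ^ 2) with hR
  have hR0 : 0 ≤ R := Real.sqrt_nonneg _
  -- bound on gradient over the compact ball
  obtain ⟨C, hC⟩ := (isCompact_closedBall (0 : EuclideanSpace ℝ (Fin d)) R).exists_bound_of_continuousOn
    (continuous_gradient hf).continuousOn
  have hC0 : 0 ≤ C := le_trans (norm_nonneg _) (hC 0 (Metric.mem_closedBall_self hR0))
  -- exp coordinate bound
  have hexp : ∀ z ∈ Set.Ioc (0:ℝ) 1, ∀ y : EuclideanSpace ℝ (Fin d), dist y x ≤ 1 →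
      ∀ i, Real.exp (-(z * y i)) ≤ A := by
    intro z hz y hy i
    rw [hA]
    apply Real.exp_le_exp.mpr
    have h1 : |y i| ≤ ‖y‖ := abs_coord_le_norm y i
    have h2 : ‖y‖ ≤ ‖x‖ + 1 := by
      have := norm_sub_norm_le y x
      rw [← dist_eq_norm] at this
      linarith
    have h3 : -(z * y i) ≤ |z * y i| := neg_le_abs _
    have h4 : |z * y i| = z * |y i| := by
      rw [abs_mul, abs_of_pos hz.1]
    have h5 : z * |y i| ≤ |y i| := mul_le_of_le_one_left (abs_nonneg _) hz.2
    linarith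
  -- hmap membership
  have hmem : ∀ z ∈ Set.Ioc (0:ℝ) 1, ∀ y : EuclideanSpace ℝ (Fin d), dist y x ≤ 1 →
      hmap z y ∈ Metric.closedBall (0 : EuclideanSpace ℝ (Fin d)) R := by
    intro z hz y hy
    rw [Metric.mem_closedBall, dist_zero_right, hR]
    apply norm_le_sqrt_of_coord_le
    intro i
    have h1 := hexp z hz y hy i
    have h2 : (0:ℝ) < Real.exp (-(z * y i)) := Real.exp_pos _
    have : |hmap z y i| ≤ 1 + Real.exp (-(z * y i)) := by
      simp only [hmap, PiLp.toLp_apply]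
      rw [abs_sub_comm]
      calc |Real.exp (-(z * y i)) - 1| ≤ |Real.exp (-(z * y i))| + |1| := abs_sub _ _
        _ = Real.exp (-(z * y i)) + 1 := by rw [abs_of_pos h2, abs_one]
        _ = 1 + Real.exp (-(z * y i)) := by ring
    linarith
  -- norm bound on G
  have hGbound : ∀ z ∈ Set.Ioc (0:ℝ) 1, ∀ y : EuclideanSpace ℝ (Fin d), dist y x ≤ 1 →
      ‖had (gradient f (hmap z y)) (expv z y)‖ ≤ A * C := by
    intro z hz y hy
    have hg : ‖gradient f (hmap z y)‖ ≤ C := hC _ (hmem z hz y hy)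
    have h1 : ‖had (gradient f (hmap z y)) (expv z y)‖ ≤ ‖A • gradient f (hmap z y)‖ := by
      apply euclid_norm_le_norm
      intro i
      have he := hexp z hz y hy i
      have he0 : (0:ℝ) < Real.exp (-(z * y i)) := Real.exp_pos _
      simp only [had, expv, PiLp.toLp_apply]
      rw [PiLp.smul_apply, smul_eq_mul, abs_mul, abs_mul, abs_of_pos hA0, abs_of_pos he0,
        mul_comm A]
      exact mul_le_mul_of_nonneg_left he (abs_nonneg _)
    calc ‖had (gradient f (hmap z y)) (expv z y)‖ ≤ ‖A • gradient f (hmap z y)‖ := h1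
      _ = A * ‖gradient f (hmap z y)‖ := by rw [norm_smul, Real.norm_eq_abs, abs_of_pos hA0]
      _ ≤ A * C := by nlinarith
  -- the functions
  set Fn : EuclideanSpace ℝ (Fin d) → ℝ → ℝ := fun y z =>
    Real.exp (z - 1) / ((1 - Real.exp (-1)) * z) * (f (hmap z y) - f 0) with hFn
  set G : EuclideanSpace ℝ (Fin d) → ℝ → EuclideanSpace ℝ (Fin d) := fun y z =>
    (Real.exp (z - 1) / (1 - Real.exp (-1))) • had (gradient f (hmap z y)) (expv z y) with hG
  set F' : EuclideanSpace ℝ (Fin d) → ℝ →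
      (EuclideanSpace ℝ (Fin d) →L[ℝ] ℝ) := fun y z =>
    (InnerProductSpace.toDual ℝ (EuclideanSpace ℝ (Fin d))) (G y z) with hF'
  set B : ℝ := (1 - Real.exp (-1))⁻¹ * (A * C) with hB
  -- exp (z-1) ≤ 1 for z ≤ 1
  have hexp1 : ∀ z ∈ Set.Ioc (0:ℝ) 1, Real.exp (z - 1) ≤ 1 := fun z hz =>
    Real.exp_le_one_iff.mpr (by linarith [hz.2])
  -- bound on ‖G y z‖
  have hGB : ∀ z ∈ Set.Ioc (0:ℝ) 1, ∀ y : EuclideanSpace ℝ (Fin d), dist y x ≤ 1 →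
      ‖G y z‖ ≤ B := by
    intro z hz y hy
    rw [hG]
    have h1 : ‖(Real.exp (z - 1) / (1 - Real.exp (-1))) •
        had (gradient f (hmap z y)) (expv z y)‖
        = (Real.exp (z - 1) / (1 - Real.exp (-1))) *
          ‖had (gradient f (hmap z y)) (expv z y)‖ := by
      rw [norm_smul, Real.norm_eq_abs, abs_of_pos (by positivity)]
    rw [h1, hB]
    have h2 := hGbound z hz y hy
    have h3 := hexp1 z hz
    have h4 : Real.exp (z - 1) / (1 - Real.exp (-1)) ≤ (1 - Real.exp (-1))⁻¹ := by
      rw [div_eq_mul_inv]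
      nlinarith [inv_pos.mpr h1e]
    have h5 : (0:ℝ) < Real.exp (z - 1) / (1 - Real.exp (-1)) := by positivity
    nlinarith [norm_nonneg (had (gradient f (hmap z y)) (expv z y))]
  -- measurability of Fn y
  have hFnmeas : ∀ y : EuclideanSpace ℝ (Fin d),
      MeasureTheory.AEStronglyMeasurable (Fn y) μ := by
    intro y
    rw [hμ]
    apply ContinuousOn.aestronglyMeasurable _ measurableSet_Ioc
    apply ContinuousOn.mul
    · apply ContinuousOn.div (by fun_prop) (by fun_prop)
      intro z hz
      exact mul_ne_zero (ne_of_gt h1e) (ne_of_gt hz.1)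
    · exact ((hf.continuous.comp (continuous_hmap_z y)).continuousOn).sub continuousOn_const
  -- per-z differentiability
  have hdiffz : ∀ z ∈ Set.Ioc (0:ℝ) 1, ∀ y : EuclideanSpace ℝ (Fin d),
      HasFDerivAt (fun w => Fn w z) (F' y z) y := by
    intro z hz y
    have hkey := (hasGradientAt_comp_hmap hf z y).hasFDerivAt
    have h2 := (hkey.sub_const (f 0)).const_mul
      (Real.exp (z - 1) / ((1 - Real.exp (-1)) * z))
    refine h2.congr_fderiv ?_
    refine ContinuousLinearMap.ext fun u => ?_
    rw [hF', hG]
    simp only [ContinuousLinearMap.smul_apply, InnerProductSpace.toDual_apply_apply,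
      real_inner_smul_left, smul_eq_mul]
    have hz0 : z ≠ 0 := ne_of_gt hz.1
    field_simp
  -- integrability of Fn x
  have hconstInt : ∀ c : ℝ, MeasureTheory.Integrable (fun _ : ℝ => c) μ := by
    intro c
    rw [hμ]
    exact MeasureTheory.integrableOn_const measure_Ioc_lt_top.ne
  have hFnint : MeasureTheory.Integrable (Fn x) μ := by
    apply MeasureTheory.Integrable.mono' (hconstInt ((1 - Real.exp (-1))⁻¹ * (C * ‖x‖)))
      (hFnmeas x)
    rw [hμ]
    filter_upwards [MeasureTheory.ae_restrict_mem measurableSet_Ioc] with z hz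
    -- MVT bound
    have hdball : ∀ w ∈ Metric.closedBall (0 : EuclideanSpace ℝ (Fin d)) R,
        DifferentiableAt ℝ f w := fun w _ => (hf.differentiable one_ne_zero) w
    have hfd : ∀ w ∈ Metric.closedBall (0 : EuclideanSpace ℝ (Fin d)) R,
        ‖fderiv ℝ f w‖ ≤ C := by
      intro w hw
      have heq : ‖gradient f w‖ = ‖fderiv ℝ f w‖ := by
        rw [gradient]; exact LinearIsometryEquiv.norm_map _ _
      rw [← heq]; exact hC w hw
    have h0mem : (0 : EuclideanSpace ℝ (Fin d)) ∈
        Metric.closedBall (0 : EuclideanSpace ℝ (Fin d)) R :=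
      Metric.mem_closedBall_self hR0
    have hmvt := (convex_closedBall (0 : EuclideanSpace ℝ (Fin d)) R).norm_image_sub_le_of_norm_fderiv_le
      hdball hfd h0mem (hmem z hz x (by simp))
    rw [sub_zero] at hmvt
    -- ‖hmap z x‖ ≤ z * ‖x‖
    have hhx : ‖hmap z x‖ ≤ ‖z • x‖ := by
      apply euclid_norm_le_norm
      intro i
      have hxi := hx i
      have ht : 0 ≤ z * x i := mul_nonneg (le_of_lt hz.1) hxi.1
      have h1 : Real.exp (-(z * x i)) ≤ 1 := Real.exp_le_one_iff.mpr (by linarith)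
      have h2 : 1 - z * x i ≤ Real.exp (-(z * x i)) := by
        have := Real.add_one_le_exp (-(z * x i)); linarith
      show |1 - Real.exp (-(z * x i))| ≤ |(z • x) i|
      rw [PiLp.smul_apply, smul_eq_mul, abs_of_nonneg (by linarith), abs_of_nonneg ht]
      linarith
    have hzx : ‖z • x‖ = z * ‖x‖ := by
      rw [norm_smul, Real.norm_eq_abs, abs_of_pos hz.1]
    have hbnd : |f (hmap z x) - f 0| ≤ C * (z * ‖x‖) := by
      calc |f (hmap z x) - f 0| ≤ C * ‖hmap z x‖ := hmvt
        _ ≤ C * (z * ‖x‖) := by rw [← hzx]; exact mul_le_mul_of_nonneg_left hhx hC0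
    rw [hFn, Real.norm_eq_abs, abs_mul]
    have hdenpos : (0:ℝ) < (1 - Real.exp (-1)) * z := mul_pos h1e hz.1
    have habs : |Real.exp (z - 1) / ((1 - Real.exp (-1)) * z)|
        = Real.exp (z - 1) / ((1 - Real.exp (-1)) * z) := abs_of_pos (by positivity)
    rw [habs]
    calc Real.exp (z - 1) / ((1 - Real.exp (-1)) * z) * |f (hmap z x) - f 0|
        ≤ Real.exp (z - 1) / ((1 - Real.exp (-1)) * z) * (C * (z * ‖x‖)) :=
          mul_le_mul_of_nonneg_left hbnd (by positivity)
      _ = Real.exp (z - 1) / (1 - Real.exp (-1)) * (C * ‖x‖) := by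
          have hz0 : z ≠ 0 := ne_of_gt hz.1
          field_simp
      _ ≤ (1 - Real.exp (-1))⁻¹ * (C * ‖x‖) := by
          have h3 := hexp1 z hz
          have : Real.exp (z - 1) / (1 - Real.exp (-1)) ≤ (1 - Real.exp (-1))⁻¹ := by
            rw [div_eq_mul_inv]
            nlinarith [inv_pos.mpr h1e]
          nlinarith [norm_nonneg x, hC0, mul_nonneg hC0 (norm_nonneg x)]
  -- measurability of F' x
  have hF'meas : MeasureTheory.AEStronglyMeasurable (F' x) μ := by
    have : Continuous (F' x) := by
      rw [hF']
      exact (InnerProductSpace.toDual ℝ (EuclideanSpace ℝ (Fin d))).continuous.comp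
        (((Real.continuous_exp.comp (by fun_prop)).div_const _).smul (continuous_G hf x))
    exact this.aestronglyMeasurable
  -- main application
  have key := hasFDerivAt_integral_of_dominated_of_fderiv_le (μ := μ) (F := Fn) (F' := F')
    (x₀ := x) (bound := fun _ => B) (Metric.ball_mem_nhds x one_pos)
    (Filter.Eventually.of_forall hFnmeas) hFnint hF'meas
    ?_ (hconstInt B) ?_
  · -- conclude
    have hsur : surrogate f = fun y => ∫ z, Fn y z ∂μ := by
      funext y
      rw [surrogate, hμ, intervalIntegral.integral_of_le zero_le_one]
    have hint : (∫ z, F' x z ∂μ) =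
        (InnerProductSpace.toDual ℝ (EuclideanSpace ℝ (Fin d))) (∫ z, G x z ∂μ) := by
      rw [hF']
      exact (InnerProductSpace.toDual ℝ
        (EuclideanSpace ℝ (Fin d))).toLinearIsometry.integral_comp_comm (G x)
    rw [hint] at key
    rw [← hsur] at key
    have hgrad : HasGradientAt (surrogate f) (∫ z, G x z ∂μ) x :=
      hasGradientAt_iff_hasFDerivAt.mpr key
    rw [hgrad.gradient, hμ, intervalIntegral.integral_of_le zero_le_one]
  · -- h_bound
    rw [hμ]
    filter_upwards [MeasureTheory.ae_restrict_mem measurableSet_Ioc] with z hz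
    intro y hy
    rw [hF']
    have : ‖(InnerProductSpace.toDual ℝ (EuclideanSpace ℝ (Fin d))) (G y z)‖ = ‖G y z‖ :=
      LinearIsometryEquiv.norm_map _ _
    rw [this]
    exact hGB z hz y (le_of_lt (Metric.mem_ball.mp hy))
  · -- h_diff
    rw [hμ]
    filter_upwards [MeasureTheory.ae_restrict_mem measurableSet_Ioc] with z hz
    intro y _
    exact hdiffz z hz y
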